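/- Let p_a(x) = s_a(x_1²,...,x_n²) for a = 1,...,n−1 and p_n(x) = x_1 x_2 ⋯ x_n be the standard basic invariants of D_n. Then for all a = 1,...,n−1 and all x ∈ ℝ^n: ∇p_a(x)·∇p_n(x) = 2(n−a+1)·p_{a−1}(x)·p_n(x) (with p_0 = 1), and ∇p_n(x)·∇p_n(x) = p_{n−1}(x). -/

import Mathlib

open MvPolynomial Finset

/-- `sₐ(x₁², …, xₙ²)`, the `Bₙ`-type basic invariants (used for `a ≤ n-1` in type `Dₙ`). -/
noncomputable def BnInvariant (n c : ℕ) : MvPolynomial (Fin n) ℝ :=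
  bind₁ (fun i : Fin n => (X i : MvPolynomial (Fin n) ℝ) ^ 2) (esymm (Fin n) ℝ c)

/-- The last basic invariant of `Dₙ`: the product of all the coordinates. -/
noncomputable def DnLastInvariant (n : ℕ) : MvPolynomial (Fin n) ℝ :=
  ∏ i : Fin n, X i

set_option maxHeartbeats 1000000

lemma pderiv_prod_X {n : ℕ} (j : Fin n) (s : Finset (Fin n)) :
    pderiv j (∏ i ∈ s, (X i : MvPolynomial (Fin n) ℝ)) =
      if j ∈ s then ∏ i ∈ s.erase j, X i else 0 := by
  induction s using Finset.induction_on with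
  | empty => simp
  | insert _ _ h ih =>
    rename_i c s'
    rw [Finset.prod_insert h, pderiv_mul, ih]
    by_cases hj : j = c
    · subst hj
      simp [h, Finset.erase_insert h, pderiv_X_self]
    · rw [pderiv_X_of_ne (Ne.symm hj)]
      by_cases hjs : j ∈ s'
      · rw [if_pos hjs, if_pos (Finset.mem_insert_of_mem hjs),
          Finset.erase_insert_of_ne (Ne.symm hj),
          Finset.prod_insert (fun hc => h (Finset.mem_of_mem_erase hc))]
        ring
      · simp [hjs, hj]

lemma BnInvariant_eq (n c : ℕ) :
    BnInvariant n c = ∑ s ∈ powersetCard c univ, (∏ i ∈ s, (X i : MvPolynomial (Fin n) ℝ)) ^ 2 := by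
  unfold BnInvariant
  rw [esymm, map_sum]
  refine Finset.sum_congr rfl fun s _ => ?_
  rw [map_prod]
  simp_rw [bind₁_X_right]
  rw [Finset.prod_pow]

lemma eval_BnInvariant (n c : ℕ) (x : Fin n → ℝ) :
    eval x (BnInvariant n c) = ∑ s ∈ powersetCard c univ, (∏ i ∈ s, x i) ^ 2 := by
  rw [BnInvariant_eq, map_sum]
  simp

lemma eval_pderiv_BnInvariant (n c : ℕ) (j : Fin n) (x : Fin n → ℝ) :
    eval x (pderiv j (BnInvariant n c)) =
      ∑ s ∈ powersetCard c univ,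
        (if j ∈ s then 2 * (∏ i ∈ s, x i) * (∏ i ∈ s.erase j, x i) else 0) := by
  rw [BnInvariant_eq, map_sum, map_sum]
  refine Finset.sum_congr rfl fun s _ => ?_
  rw [pderiv_pow, pderiv_prod_X]
  by_cases hjs : j ∈ s <;> simp [hjs, mul_assoc]

lemma double_count {n a : ℕ} (ha : 1 ≤ a) (han : a ≤ n) (g : Finset (Fin n) → ℝ) :
    ∑ j : Fin n, ∑ s ∈ powersetCard a univ, (if j ∈ s then g (s.erase j) else 0)
      = ((n - a + 1 : ℕ) : ℝ) * ∑ t ∈ powersetCard (a - 1) univ, g t := by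
  have step1 : ∀ j : Fin n,
      ∑ s ∈ powersetCard a univ, (if j ∈ s then g (s.erase j) else 0)
        = ∑ t ∈ powersetCard (a - 1) univ, (if j ∉ t then g t else 0) := by
    intro j
    rw [← Finset.sum_filter, ← Finset.sum_filter]
    refine Finset.sum_nbij' (fun s => s.erase j) (fun t => insert j t) ?_ ?_ ?_ ?_ ?_
    · intro s hs
      simp only [Finset.mem_filter, Finset.mem_powersetCard_univ] at hs ⊢
      exact ⟨by rw [Finset.card_erase_of_mem hs.2, hs.1], Finset.notMem_erase j s⟩
    · intro t ht
      simp only [Finset.mem_filter, Finset.mem_powersetCard_univ] at ht ⊢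
      exact ⟨by rw [Finset.card_insert_of_notMem ht.2, ht.1]; omega,
        Finset.mem_insert_self j t⟩
    · intro s hs
      simp only [Finset.mem_filter] at hs
      exact Finset.insert_erase hs.2
    · intro t ht
      simp only [Finset.mem_filter] at ht
      exact Finset.erase_insert ht.2
    · intro s hs; rfl
  simp_rw [step1]
  rw [Finset.sum_comm]
  rw [Finset.mul_sum]
  refine Finset.sum_congr rfl fun t ht => ?_
  rw [← Finset.sum_filter, Finset.sum_const, nsmul_eq_mul]
  congr 1
  have hcard : t.card = a - 1 := (Finset.mem_powersetCard_univ.mp ht)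
  have : (univ.filter fun j => j ∉ t) = tᶜ := by
    ext j; simp [Finset.mem_compl]
  rw [this, Finset.card_compl, hcard, Fintype.card_fin]
  norm_cast
  omega

/-- The last row/column and corner entries of the `P`-matrix of `Dₙ`:
`∇pₐ·∇pₙ = 2(n-a+1)·p_{a-1}·pₙ` for `a = 1, …, n-1`, and `∇pₙ·∇pₙ = p_{n-1}`. -/
theorem Dn_P_matrix_last_row (n a : ℕ) (ha : 1 ≤ a) (han : a ≤ n - 1) (x : Fin n → ℝ) :
    (∑ j : Fin n,
        eval x (pderiv j (BnInvariant n a)) * eval x (pderiv j (DnLastInvariant n)))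
        = ((2 * (n - a + 1) : ℕ) : ℝ) * eval x (BnInvariant n (a - 1)) *
            eval x (DnLastInvariant n)
    ∧ (∑ j : Fin n, eval x (pderiv j (DnLastInvariant n)) *
          eval x (pderiv j (DnLastInvariant n)))
        = eval x (BnInvariant n (n - 1)) := by
  have hn2 : 2 ≤ n := by omega
  have hdn : ∀ j : Fin n, eval x (pderiv j (DnLastInvariant n)) = ∏ i ∈ univ.erase j, x i := by
    intro j
    rw [DnLastInvariant, pderiv_prod_X, if_pos (Finset.mem_univ j), map_prod]
    simp
  have hevaldn : eval x (DnLastInvariant n) = ∏ i : Fin n, x i := by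
    rw [DnLastInvariant, map_prod]; simp
  constructor
  · calc ∑ j : Fin n, eval x (pderiv j (BnInvariant n a)) * eval x (pderiv j (DnLastInvariant n))
        = ∑ j : Fin n, ∑ s ∈ powersetCard a univ,
            (if j ∈ s then (2 * (∏ i ∈ s.erase j, x i) ^ 2 * ∏ i : Fin n, x i) else 0) := by
          refine Finset.sum_congr rfl fun j _ => ?_
          rw [eval_pderiv_BnInvariant, hdn, Finset.sum_mul]
          refine Finset.sum_congr rfl fun s _ => ?_
          rw [ite_mul, zero_mul]
          by_cases hjs : j ∈ s
          · rw [if_pos hjs, if_pos hjs, ← Finset.mul_prod_erase s x hjs,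
              ← Finset.mul_prod_erase univ x (Finset.mem_univ j)]
            ring
          · simp [hjs]
      _ = ((n - a + 1 : ℕ) : ℝ) * ∑ t ∈ powersetCard (a - 1) univ,
            (2 * (∏ i ∈ t, x i) ^ 2 * ∏ i : Fin n, x i) :=
          double_count ha (by omega) (fun t => 2 * (∏ i ∈ t, x i) ^ 2 * ∏ i : Fin n, x i)
      _ = ((2 * (n - a + 1) : ℕ) : ℝ) * eval x (BnInvariant n (a - 1)) *
            eval x (DnLastInvariant n) := by
          rw [eval_BnInvariant, hevaldn]
          have h2 : ∑ t ∈ powersetCard (a - 1) univ, 2 * (∏ i ∈ t, x i) ^ 2 * ∏ i : Fin n, x i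
              = (∑ t ∈ powersetCard (a - 1) univ, (∏ i ∈ t, x i) ^ 2)
                  * (2 * ∏ i : Fin n, x i) := by
            rw [Finset.sum_mul]
            exact Finset.sum_congr rfl fun t _ => by ring
          rw [h2]
          push_cast
          ring
  · simp_rw [hdn, eval_BnInvariant]
    refine Finset.sum_bij (fun j _ => univ.erase j) ?_ ?_ ?_ ?_
    · intro j _
      rw [Finset.mem_powersetCard_univ, Finset.card_erase_of_mem (Finset.mem_univ j),
        Finset.card_univ, Fintype.card_fin]
    · intro j₁ _ j₂ _ h
      by_contra hne
      have : j₂ ∈ univ.erase j₁ := Finset.mem_erase.mpr ⟨Ne.symm hne, Finset.mem_univ j₂⟩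
      rw [h] at this
      exact Finset.notMem_erase j₂ univ this
    · intro t ht
      have hc : tᶜ.card = 1 := by
        rw [Finset.card_compl, Finset.mem_powersetCard_univ.mp ht, Fintype.card_fin]
        omega
      obtain ⟨j, hj⟩ := Finset.card_eq_one.mp hc
      refine ⟨j, Finset.mem_univ j, ?_⟩
      show univ.erase j = t
      rw [← Finset.compl_singleton, ← hj, compl_compl]
    · intro j _
      rw [sq]
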